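/- Let {σ_i^A}_{i=0,…,d_A²−1} and {σ_j^B}_{j=0,…,d_B²−1} be normalized Hermitian operator bases for d_A×d_A and d_B×d_B matrices. Let ρ be a state on ℂ^{d_A·d_B}, let M be a Hermitian d_A·d_B × d_A·d_B matrix, and let c ∈ ℝ satisfy Re(Tr((ρ₁⊗ρ₂)·M)) ≤ c for all states ρ₁ on ℂ^{d_A}, ρ₂ on ℂ^{d_B}. Assume Re(Tr(ρ·M)) > c. Set w_{ij} = Re(Tr((c·I − M)·(σ_i^A ⊗ σ_j^B))), T_{kl} = Re(Tr(ρ·(σ_k^A ⊗ σ_l^B))), and Λᵈ[μ] = Σ_{i,j} (1/4)·w_{ij}·Tr(σ_j^B·μ)·σ_i^A. Then the d_A²×d_A² matrix ρ' = (1/4)·Σ_{k,l} T_{kl}·σ_k^A ⊗ (Λᵈ[σ_l^B])ᵀ is NOT positive semidefinite. (In other words, the positive map 𝒯∘Λᵈ built from the functional entanglement identifier detects the entanglement of ρ: (id ⊗ 𝒯∘Λᵈ)[ρ] ≱ 0.) -/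

import Mathlib

open Matrix
open scoped Kronecker ComplexOrder

noncomputable section

def IsQState {n : Type*} [Fintype n] (ρ : Matrix n n ℂ) : Prop :=
  ρ.PosSemidef ∧ ρ.trace = 1

def IsHermOpBasis {d : ℕ} (σ : Fin (d ^ 2) → Matrix (Fin d) (Fin d) ℂ) : Prop :=
  (∀ i, (σ i).IsHermitian) ∧
  ∀ i j, (σ i * σ j).trace = if i = j then 2 else 0

lemma herm_trace_real' {n : Type*} [Fintype n] {A B : Matrix n n ℂ}
    (hA : A.IsHermitian) (hB : B.IsHermitian) :
    (A * B).trace = (((A * B).trace).re : ℂ) := by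
  have h1 : star ((A * B).trace) = (A * B).trace := by
    rw [← Matrix.trace_conjTranspose, Matrix.conjTranspose_mul, hA.eq, hB.eq,
      Matrix.trace_mul_comm]
  exact (Complex.conj_eq_iff_re.mp h1).symm

lemma parseval' {n ι : Type*} [Fintype n] [DecidableEq n] [Fintype ι] [DecidableEq ι]
    (v : ι → Matrix n n ℂ)
    (horth : ∀ i j, (v i * v j).trace = if i = j then 4 else 0)
    (hcard : Fintype.card ι = Fintype.card n ^ 2) (X Y : Matrix n n ℂ) :
    (Y * X).trace = (1/4 : ℂ) * ∑ i, (X * v i).trace * (Y * v i).trace := by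
  have hli : LinearIndependent ℂ v := by
    rw [Fintype.linearIndependent_iff]
    intro g hg j
    have h2 := congrArg (fun Z => (Z * v j).trace) hg
    simp only [Matrix.sum_mul, Matrix.smul_mul, Matrix.trace_sum, Matrix.trace_smul,
      Matrix.zero_mul, Matrix.trace_zero, smul_eq_mul, horth,
      mul_ite, mul_zero, Finset.sum_ite_eq', Finset.mem_univ, if_true] at h2
    simpa using h2
  have hspan : Submodule.span ℂ (Set.range v) = ⊤ := by
    refine hli.span_eq_top_of_card_eq_finrank' ?_
    simp [Module.finrank_matrix, hcard, sq]
  have hX : X ∈ Submodule.span ℂ (Set.range v) := hspan ▸ Submodule.mem_top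
  obtain ⟨d, hd⟩ := (Submodule.mem_span_range_iff_exists_fun ℂ).mp hX
  have hdj : ∀ j, d j = (1/4 : ℂ) * (X * v j).trace := by
    intro j
    have h2 := congrArg (fun Z => (Z * v j).trace) hd
    simp only [Matrix.sum_mul, Matrix.smul_mul, Matrix.trace_sum, Matrix.trace_smul,
      smul_eq_mul, horth, mul_ite, mul_zero, Finset.sum_ite_eq', Finset.mem_univ,
      if_true] at h2
    field_simp
    linear_combination h2
  calc (Y * X).trace = (Y * ∑ i, d i • v i).trace := by rw [hd]
    _ = ∑ i, d i * (Y * v i).trace := by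
        simp [Matrix.mul_sum, Matrix.trace_sum, Matrix.mul_smul, Matrix.trace_smul]
    _ = (1/4 : ℂ) * ∑ i, (X * v i).trace * (Y * v i).trace := by
        rw [Finset.mul_sum]
        exact Finset.sum_congr rfl fun i _ => by rw [hdj i]; ring

lemma pairing' {d : ℕ} (A B : Matrix (Fin d) (Fin d) ℂ) :
    (star (fun p : Fin d × Fin d => if p.1 = p.2 then (1:ℂ) else 0)) ⬝ᵥ
      ((A ⊗ₖ Bᵀ) *ᵥ fun p : Fin d × Fin d => if p.1 = p.2 then (1:ℂ) else 0)
      = (A * B).trace := by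
  simp [dotProduct, Matrix.mulVec, Matrix.trace, Matrix.diag, Matrix.mul_apply,
    Fintype.sum_prod_type, Pi.star_apply, apply_ite, mul_ite, ite_mul,
    mul_zero, zero_mul, Finset.sum_ite_eq, Finset.sum_ite_eq', kroneckerMap_apply,
    transpose_apply]

lemma sum_mulVec' {ι n m : Type*} [Fintype ι] [Fintype m] (f : ι → Matrix n m ℂ)
    (x : m → ℂ) : (∑ i, f i) *ᵥ x = ∑ i, f i *ᵥ x := by
  ext j
  simp only [Matrix.mulVec, dotProduct, Finset.sum_apply, Matrix.sum_apply, Finset.sum_mul]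
  rw [Finset.sum_comm]

lemma dot_sum' {ι m : Type*} [Fintype ι] [Fintype m] (v : m → ℂ) (f : ι → m → ℂ) :
    v ⬝ᵥ (∑ i, f i) = ∑ i, v ⬝ᵥ f i := by
  simp only [dotProduct, Finset.sum_apply, Finset.mul_sum]
  rw [Finset.sum_comm]

lemma kron_herm' {m n : Type*} [Fintype m] [Fintype n] {A : Matrix m m ℂ} {B : Matrix n n ℂ}
    (hA : A.IsHermitian) (hB : B.IsHermitian) : (A ⊗ₖ B).IsHermitian := by
  ext p q
  have h1 : star (A q.1 p.1) = A p.1 q.1 := congrFun (congrFun hA.eq p.1) q.1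
  have h2 : star (B q.2 p.2) = B p.2 q.2 := congrFun (congrFun hB.eq p.2) q.2
  simp only [conjTranspose_apply, kroneckerMap_apply, star_mul', h1, h2, mul_comm]

/-- the positive map `𝒯 ∘ Λᵈ` built from a functional entanglement
identifier detects the entanglement of `ρ`: the matrix
`ρ' = (id ⊗ 𝒯∘Λᵈ)[ρ]` is not positive semidefinite. -/
theorem induced_map_detects_entanglement
    {dA dB : ℕ}
    (σA : Fin (dA ^ 2) → Matrix (Fin dA) (Fin dA) ℂ) (hA : IsHermOpBasis σA)
    (σB : Fin (dB ^ 2) → Matrix (Fin dB) (Fin dB) ℂ) (hB : IsHermOpBasis σB)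
    (ρ : Matrix (Fin dA × Fin dB) (Fin dA × Fin dB) ℂ) (hρ : IsQState ρ)
    (M : Matrix (Fin dA × Fin dB) (Fin dA × Fin dB) ℂ) (hM : M.IsHermitian)
    (c : ℝ)
    (hc : ∀ (ρ₁ : Matrix (Fin dA) (Fin dA) ℂ) (ρ₂ : Matrix (Fin dB) (Fin dB) ℂ),
      IsQState ρ₁ → IsQState ρ₂ → (((ρ₁ ⊗ₖ ρ₂) * M).trace).re ≤ c)
    (h : c < ((ρ * M).trace).re)
    (w : Fin (dA ^ 2) → Fin (dB ^ 2) → ℝ)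
    (hw : ∀ i j, w i j = ((((c : ℂ) • (1 : Matrix (Fin dA × Fin dB) (Fin dA × Fin dB) ℂ) - M)
      * (σA i ⊗ₖ σB j)).trace).re)
    (T : Fin (dA ^ 2) → Fin (dB ^ 2) → ℝ)
    (hT : ∀ k l, T k l = ((ρ * (σA k ⊗ₖ σB l)).trace).re)
    (Λd : Matrix (Fin dB) (Fin dB) ℂ → Matrix (Fin dA) (Fin dA) ℂ)
    (hΛd : ∀ μ, Λd μ = ∑ i, ∑ j, (((1 / 4 : ℝ) * w i j : ℝ) * (σB j * μ).trace) • σA i)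
    (ρ' : Matrix ((Fin dA) × (Fin dA)) ((Fin dA) × (Fin dA)) ℂ)
    (hρ' : ρ' = (1 / 4 : ℂ) • ∑ k, ∑ l, ((T k l : ℝ) : ℂ) • (σA k ⊗ₖ (Λd (σB l))ᵀ)) :
    ¬ ρ'.PosSemidef := by
  intro hps
  set cm : Matrix (Fin dA × Fin dB) (Fin dA × Fin dB) ℂ :=
    (c : ℂ) • (1 : Matrix (Fin dA × Fin dB) (Fin dA × Fin dB) ℂ) - M with hcm_def
  have hcm : cm.IsHermitian := by
    refine Matrix.IsHermitian.sub ?_ hM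
    show ((c : ℂ) • (1 : Matrix (Fin dA × Fin dB) (Fin dA × Fin dB) ℂ))ᴴ = _
    rw [Matrix.conjTranspose_smul, Matrix.conjTranspose_one, Complex.star_def,
      Complex.conj_ofReal]
  have hρH : ρ.IsHermitian := hρ.1.1
  set v : (Fin (dA ^ 2) × Fin (dB ^ 2)) → Matrix (Fin dA × Fin dB) (Fin dA × Fin dB) ℂ :=
    fun p => σA p.1 ⊗ₖ σB p.2 with hv_def
  have horth : ∀ i j, (v i * v j).trace = if i = j then 4 else 0 := by
    intro i j
    rw [hv_def]
    simp only [← Matrix.mul_kronecker_mul, Matrix.trace_kronecker, hA.2, hB.2]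
    by_cases h1 : i.1 = j.1 <;> by_cases h2 : i.2 = j.2 <;>
      simp [h1, h2, Prod.ext_iff] <;> norm_num
  have hcard : Fintype.card (Fin (dA ^ 2) × Fin (dB ^ 2))
      = Fintype.card (Fin dA × Fin dB) ^ 2 := by
    simp [mul_pow]
  have hvherm : ∀ p, (v p).IsHermitian := fun p => kron_herm' (hA.1 p.1) (hB.1 p.2)
  have hpar := parseval' v horth hcard cm ρ
  have hwre : ∀ p : Fin (dA ^ 2) × Fin (dB ^ 2),
      (cm * v p).trace = ((w p.1 p.2 : ℝ) : ℂ) := by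
    intro p
    rw [hw p.1 p.2]
    exact herm_trace_real' hcm (hvherm p)
  have hTre : ∀ p : Fin (dA ^ 2) × Fin (dB ^ 2),
      (ρ * v p).trace = ((T p.1 p.2 : ℝ) : ℂ) := by
    intro p
    rw [hT p.1 p.2]
    exact herm_trace_real' hρH (hvherm p)
  have hsum : (ρ * cm).trace
      = (1/4 : ℂ) * ∑ p : Fin (dA ^ 2) × Fin (dB ^ 2),
          ((w p.1 p.2 : ℝ) : ℂ) * ((T p.1 p.2 : ℝ) : ℂ) := by
    rw [hpar]
    congr 1
    exact Finset.sum_congr rfl fun p _ => by rw [hwre p, hTre p]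
  have hlhs : (ρ * cm).trace = (c : ℂ) - (ρ * M).trace := by
    rw [hcm_def, Matrix.mul_sub, Matrix.trace_sub, Matrix.mul_smul, Matrix.mul_one,
      Matrix.trace_smul, hρ.2]
    simp
  -- value of the quadratic form at the maximally entangled vector
  have hq := hps.dotProduct_mulVec_nonneg (fun p : Fin dA × Fin dA => if p.1 = p.2 then (1:ℂ) else 0)
  have hqval : (star (fun p : Fin dA × Fin dA => if p.1 = p.2 then (1:ℂ) else 0)) ⬝ᵥ
      (ρ' *ᵥ fun p : Fin dA × Fin dA => if p.1 = p.2 then (1:ℂ) else 0)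
      = (ρ * cm).trace := by
    rw [hsum, hρ', Matrix.smul_mulVec, dotProduct_smul, smul_eq_mul]
    congr 1
    rw [sum_mulVec', dot_sum', Fintype.sum_prod_type]
    refine Finset.sum_congr rfl fun k _ => ?_
    rw [sum_mulVec', dot_sum']
    refine Finset.sum_congr rfl fun l _ => ?_
    rw [Matrix.smul_mulVec, dotProduct_smul, smul_eq_mul, pairing']
    have htr : (σA k * Λd (σB l)).trace = ((w k l : ℝ) : ℂ) := by
      rw [hΛd]
      rw [Matrix.mul_sum, Matrix.trace_sum]
      rw [Finset.sum_congr rfl (fun i _ => by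
        rw [Matrix.mul_sum, Matrix.trace_sum])]
      simp only [Matrix.mul_smul, Matrix.trace_smul, smul_eq_mul, hA.2, hB.2]
      simp only [mul_ite, mul_zero, ite_mul, zero_mul]
      rw [Finset.sum_comm]
      simp only [Finset.sum_ite_eq, Finset.sum_ite_eq', Finset.mem_univ, if_true]
      push_cast
      ring
    rw [htr]
    ring
  rw [hqval, hlhs] at hq
  have him := (Complex.le_def.mp hq).1
  simp only [Complex.zero_re, Complex.sub_re, Complex.ofReal_re] at him
  linarith
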